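/- Correlation of consecutive probings under equal phase shifts, direct path subtracted (Lemma 3, EPS case). In the direct-path-subtracted model with samples t_p = star v ⬝ᵥ (Φ_p.mulVec u) + (n_p − n_d), suppose Φ_p(ω) = exp(I · φ_p(ω)) · (identity matrix), where φ₁, φ₂ are independent real random variables, each uniform on (−π, π), independent of (u, v, n₁, n₂, n_d). Assume (u, v, n₁, n₂, n_d) mutually independent, all (entrywise) zero-mean and square-integrable, E[|n₁|²] = E[|n₂|²] = σ², E[n₁ · conj(n₂)] = 0, E[|n_d|²] = σ_d². Then the correlation coefficient ρ = E[t₁ · conj(t₂)] / E[|t_l|²] equals σ_d² / (trace(R_v · R_u) + σ_d² + σ²). -/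

import Mathlib

open MeasureTheory ProbabilityTheory Matrix Complex Real
open scoped ENNReal

section Helpers

variable {Ω : Type*} [MeasurableSpace Ω] {μ : Measure Ω}

lemma memLp_star {p : ℝ≥0∞} {f : Ω → ℂ} (hf : MemLp f p μ) :
    MemLp (fun ω => star (f ω)) p μ :=
  hf.of_le (continuous_star.comp_aestronglyMeasurable hf.1)
    (Filter.Eventually.of_forall fun ω => by simp)

lemma int_mul {f g : Ω → ℂ} (hf : MemLp f 2 μ) (hg : MemLp g 2 μ) :
    Integrable (fun ω => f ω * g ω) μ := by
  rw [← memLp_one_iff_integrable]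
  exact MemLp.smul (E := ℂ) (𝕜 := ℂ) hg hf

lemma indep_integral_mul {α β : Type*} [MeasurableSpace α] [MeasurableSpace β]
    [IsProbabilityMeasure μ] {X : Ω → α} {Y : Ω → β}
    (hX : Measurable X) (hY : Measurable Y) (h : IndepFun X Y μ)
    {f : α → ℂ} {g : β → ℂ} (hf : Measurable f) (hg : Measurable g) :
    ∫ ω, f (X ω) * g (Y ω) ∂μ = (∫ ω, f (X ω) ∂μ) * ∫ ω, g (Y ω) ∂μ := by
  have hmap := (indepFun_iff_map_prod_eq_prod_map_map hX.aemeasurable hY.aemeasurable).1 h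
  have h1 : ∫ ω, f (X ω) * g (Y ω) ∂μ
      = ∫ z, f z.1 * g z.2 ∂(μ.map (fun ω => (X ω, Y ω))) :=
    (integral_map (hX.aemeasurable.prodMk hY.aemeasurable)
      (((hf.comp measurable_fst).mul (hg.comp measurable_snd)).aestronglyMeasurable)).symm
  rw [h1, hmap, integral_prod_mul,
    integral_map hX.aemeasurable hf.aestronglyMeasurable,
    integral_map hY.aemeasurable hg.aestronglyMeasurable]

lemma unif_exp_integral :
    ∫ x : ℝ, Complex.exp (Complex.I * x)
      ∂((ENNReal.ofReal (2 * π))⁻¹ • (volume.restrict (Set.Ioo (-π) π))) = 0 := by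
  rw [integral_smul_measure]
  have h1 : ∫ x in Set.Ioo (-π) π, Complex.exp (Complex.I * x)
      = ∫ x in (-π)..π, Complex.exp (Complex.I * x) := by
    rw [intervalIntegral.integral_of_le (by linarith [Real.pi_pos]),
      integral_Ioc_eq_integral_Ioo]
  have h2 : (∫ x in (-π)..π, Complex.exp (Complex.I * x)) = 0 := by
    rw [integral_exp_mul_complex Complex.I_ne_zero]
    have e1 : Complex.I * (π : ℂ) = (π : ℂ) * Complex.I := by ring
    have e2 : Complex.I * ((-π : ℝ) : ℂ) = -((π : ℂ) * Complex.I) := by push_cast; ring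
    rw [e1, e2, Complex.exp_pi_mul_I, Complex.exp_neg, Complex.exp_pi_mul_I]
    norm_num
  rw [h1, h2, smul_zero]

lemma exp_integral_zero [IsProbabilityMeasure μ] {ψ : Ω → ℝ} (hm : Measurable ψ)
    (h : μ.map ψ = (ENNReal.ofReal (2 * π))⁻¹ • (volume.restrict (Set.Ioo (-π) π))) :
    ∫ ω, Complex.exp (Complex.I * ψ ω) ∂μ = 0 := by
  have hmeas : AEStronglyMeasurable (fun x : ℝ => Complex.exp (Complex.I * x)) (μ.map ψ) :=
    (Complex.measurable_exp.comp
      (measurable_const.mul Complex.measurable_ofReal)).aestronglyMeasurable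
  rw [← integral_map hm.aemeasurable hmeas, h]
  exact unif_exp_integral

end Helpers

/-- **Lemma 3, EPS case** (correlation of consecutive probings under equal phase
shifts, direct path subtracted).  The samples are
`t p ω = (v ω)ᴴ ⬝ Φ p ω ⬝ u ω + (n p ω - n_d ω)` with
`Φ p ω = exp (I * φ p ω) • 1`. -/
theorem correlation_consecutive_probings_EPS_direct_subtracted
    {Ω : Type*} [MeasurableSpace Ω] (μ : Measure Ω) [IsProbabilityMeasure μ]
    {N : ℕ} (hN : 1 ≤ N)
    (u v : Ω → Fin N → ℂ)
    (φ : Fin 2 → Ω → ℝ)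
    (n : Fin 2 → Ω → ℂ) (nd : Ω → ℂ)
    (t : Fin 2 → Ω → ℂ)
    (ht : ∀ p ω, t p ω =
        star (v ω) ⬝ᵥ
            ((Complex.exp (Complex.I * (φ p ω : ℂ)) •
              (1 : Matrix (Fin N) (Fin N) ℂ)).mulVec (u ω))
        + (n p ω - nd ω))
    -- measurability
    (hum : Measurable u) (hvm : Measurable v)
    (hφm : ∀ p, Measurable (φ p)) (hnm : ∀ p, Measurable (n p)) (hndm : Measurable nd)
    -- the two phases are independent and uniform on (-π, π)
    (hφindep : IndepFun (φ 0) (φ 1) μ)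
    (hφunif : ∀ p, μ.map (φ p)
        = (ENNReal.ofReal (2 * π))⁻¹ • (volume.restrict (Set.Ioo (-π) π)))
    -- the pair of phases is independent of (u, v, n₁, n₂, n_d)
    (hφrest : IndepFun (fun ω => (φ 0 ω, φ 1 ω))
        (fun ω => (u ω, v ω, n 0 ω, n 1 ω, nd ω)) μ)
    -- (u, v, n₁, n₂, n_d) mutually independent: joint law = product of laws
    (hindep : μ.map (fun ω => (u ω, v ω, n 0 ω, n 1 ω, nd ω)) =
        (μ.map u).prod ((μ.map v).prod
          ((μ.map (n 0)).prod ((μ.map (n 1)).prod (μ.map nd)))))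
    -- square integrability
    (hnL2 : ∀ p, MemLp (n p) 2 μ) (hndL2 : MemLp nd 2 μ)
    (huL2 : ∀ i, MemLp (fun ω => u ω i) 2 μ)
    (hvL2 : ∀ i, MemLp (fun ω => v ω i) 2 μ)
    -- zero means
    (hnmean : ∀ p, ∫ ω, n p ω ∂μ = 0)
    (hndmean : ∫ ω, nd ω ∂μ = 0)
    (humean : ∀ i, ∫ ω, u ω i ∂μ = 0)
    (hvmean : ∀ i, ∫ ω, v ω i ∂μ = 0)
    -- second moments
    (σ2 σd2 : ℝ)
    (hσ : ∀ p, ∫ ω, n p ω * star (n p ω) ∂μ = (σ2 : ℂ))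
    (hnuncorr : ∫ ω, n 0 ω * star (n 1 ω) ∂μ = 0)
    (hσd : ∫ ω, nd ω * star (nd ω) ∂μ = (σd2 : ℂ))
    -- covariance matrices of the IRS channel vectors
    (Ru Rv : Matrix (Fin N) (Fin N) ℂ)
    (hRu : ∀ i j, Ru i j = ∫ ω, u ω i * star (u ω j) ∂μ)
    (hRv : ∀ i j, Rv i j = ∫ ω, v ω i * star (v ω j) ∂μ) :
    -- correlation coefficient
    ∀ l : Fin 2,
      (∫ ω, t 0 ω * star (t 1 ω) ∂μ) / (∫ ω, t l ω * star (t l ω) ∂μ)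
        = (σd2 : ℂ) / ((Rv * Ru).trace + (σd2 : ℂ) + (σ2 : ℂ)) := by
  classical
  intro l
  -- basic measurability
  have hstarm : Measurable (fun z : ℂ => star z) := continuous_star.measurable
  have hWm : Measurable (fun ω => (u ω, v ω, n 0 ω, n 1 ω, nd ω)) :=
    hum.prodMk (hvm.prodMk ((hnm 0).prodMk ((hnm 1).prodMk hndm)))
  have hsm : Measurable (fun ω => star (v ω) ⬝ᵥ u ω) := by
    simp only [dotProduct, Pi.star_apply]
    exact Finset.measurable_sum _ fun i _ => (hstarm.comp hvm.eval).mul hum.eval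
  have hSEm : Measurable
      (fun w : (Fin N → ℂ) × ((Fin N → ℂ) × (ℂ × (ℂ × ℂ))) => star w.2.1 ⬝ᵥ w.1) := by
    simp only [dotProduct, Pi.star_apply]
    exact Finset.measurable_sum _ fun i _ =>
      ((hstarm.comp measurable_snd.fst.eval).mul measurable_fst.eval)
  have hexpm : Measurable (fun x : ℝ => Complex.exp (Complex.I * x)) :=
    Complex.measurable_exp.comp (measurable_const.mul Complex.measurable_ofReal)
  have ham : ∀ p : Fin 2, Measurable (fun ω => Complex.exp (Complex.I * (φ p ω : ℂ))) :=
    fun p => hexpm.comp (hφm p)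
  -- probability measure instances for the laws
  haveI : IsProbabilityMeasure (μ.map u) := Measure.isProbabilityMeasure_map hum.aemeasurable
  haveI : IsProbabilityMeasure (μ.map v) := Measure.isProbabilityMeasure_map hvm.aemeasurable
  haveI : IsProbabilityMeasure (μ.map (n 0)) := Measure.isProbabilityMeasure_map (hnm 0).aemeasurable
  haveI : IsProbabilityMeasure (μ.map (n 1)) := Measure.isProbabilityMeasure_map (hnm 1).aemeasurable
  haveI : IsProbabilityMeasure (μ.map nd) := Measure.isProbabilityMeasure_map hndm.aemeasurable
  -- pushing the joint law through projections
  have hmapW : ∀ {γ : Type} [MeasurableSpace γ]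
      (pr : (Fin N → ℂ) × ((Fin N → ℂ) × (ℂ × (ℂ × ℂ))) → γ), Measurable pr →
      μ.map (fun ω => pr (u ω, v ω, n 0 ω, n 1 ω, nd ω)) =
        ((μ.map u).prod ((μ.map v).prod
          ((μ.map (n 0)).prod ((μ.map (n 1)).prod (μ.map nd))))).map pr := by
    intro γ _ pr hpr
    rw [← hindep]
    exact (Measure.map_map hpr hWm).symm
  -- independence of u and v
  have hIuv : IndepFun u v μ := by
    refine (indepFun_iff_map_prod_eq_prod_map_map hum.aemeasurable hvm.aemeasurable).2 ?_
    refine (hmapW (fun w => (w.1, w.2.1))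
      (measurable_fst.prodMk measurable_snd.fst)).trans ?_
    have e : (fun w : (Fin N → ℂ) × ((Fin N → ℂ) × (ℂ × (ℂ × ℂ))) => (w.1, w.2.1))
        = Prod.map (id : (Fin N → ℂ) → _) (Prod.fst) := rfl
    rw [e, ← Measure.map_prod_map _ _ measurable_id measurable_fst, Measure.map_id,
      Measure.map_fst_prod, measure_univ, one_smul]
  -- independence of n p and nd
  have hIn0 : IndepFun (n 0) nd μ := by
    refine (indepFun_iff_map_prod_eq_prod_map_map (hnm 0).aemeasurable hndm.aemeasurable).2 ?_
    refine (hmapW (fun w => (w.2.2.1, w.2.2.2.2))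
      (measurable_snd.snd.fst.prodMk measurable_snd.snd.snd.snd)).trans ?_
    have e : (fun w : (Fin N → ℂ) × ((Fin N → ℂ) × (ℂ × (ℂ × ℂ))) => (w.2.2.1, w.2.2.2.2))
        = (Prod.map (id : ℂ → ℂ) (Prod.snd : ℂ × ℂ → ℂ)) ∘ (Prod.snd ∘ Prod.snd) := rfl
    rw [e, ← Measure.map_map (measurable_id.prodMap measurable_snd)
      (measurable_snd.comp measurable_snd),
      ← Measure.map_map measurable_snd measurable_snd,
      Measure.map_snd_prod, measure_univ, one_smul,
      Measure.map_snd_prod, measure_univ, one_smul,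
      ← Measure.map_prod_map _ _ measurable_id measurable_snd, Measure.map_id,
      Measure.map_snd_prod, measure_univ, one_smul]
  have hIn1 : IndepFun (n 1) nd μ := by
    refine (indepFun_iff_map_prod_eq_prod_map_map (hnm 1).aemeasurable hndm.aemeasurable).2 ?_
    refine (hmapW (fun w => (w.2.2.2.1, w.2.2.2.2))
      (measurable_snd.snd.snd.fst.prodMk measurable_snd.snd.snd.snd)).trans ?_
    have e : (fun w : (Fin N → ℂ) × ((Fin N → ℂ) × (ℂ × (ℂ × ℂ))) => (w.2.2.2.1, w.2.2.2.2))
        = (Prod.snd ∘ (Prod.snd ∘ Prod.snd)) := rfl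
    rw [e, ← Measure.map_map measurable_snd (measurable_snd.comp measurable_snd),
      ← Measure.map_map measurable_snd measurable_snd,
      Measure.map_snd_prod, measure_univ, one_smul,
      Measure.map_snd_prod, measure_univ, one_smul,
      Measure.map_snd_prod, measure_univ, one_smul]
  have hInd : ∀ p : Fin 2, IndepFun (n p) nd μ := by
    intro p; fin_cases p
    exacts [hIn0, hIn1]
  -- elementary facts about the phase factors
  have hnorm_exp : ∀ x : ℝ, ‖Complex.exp (Complex.I * x)‖ = 1 := by
    intro x
    rw [mul_comm Complex.I (x : ℂ)]
    exact Complex.norm_exp_ofReal_mul_I x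
  have haconj : ∀ x : ℝ,
      Complex.exp (Complex.I * x) * star (Complex.exp (Complex.I * x)) = 1 := by
    intro x
    rw [← starRingEnd_apply, Complex.mul_conj]
    rw [Complex.normSq_eq_norm_sq, mul_comm Complex.I (x : ℂ), Complex.norm_exp_ofReal_mul_I]
    norm_num
  have hexp0 : ∀ p : Fin 2, ∫ ω, Complex.exp (Complex.I * (φ p ω : ℂ)) ∂μ = 0 :=
    fun p => exp_integral_zero (hφm p) (hφunif p)
  have hstarexp0 : ∀ p : Fin 2, ∫ ω, star (Complex.exp (Complex.I * (φ p ω : ℂ))) ∂μ = 0 := by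
    intro p
    have e : ∫ ω, star (Complex.exp (Complex.I * (φ p ω : ℂ))) ∂μ
        = star (∫ ω, Complex.exp (Complex.I * (φ p ω : ℂ)) ∂μ) := by
      simp only [← starRingEnd_apply]
      exact integral_conj
    rw [e, hexp0 p, star_zero]
  -- the sample expression
  have ht' : ∀ p ω, t p ω
      = Complex.exp (Complex.I * (φ p ω : ℂ)) * (star (v ω) ⬝ᵥ u ω) + (n p ω - nd ω) := by
    intro p ω
    rw [ht]
    simp [Matrix.smul_mulVec, Matrix.one_mulVec, dotProduct_smul, smul_eq_mul]
  -- L² and integrability facts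
  have hmL2 : ∀ p : Fin 2, MemLp (fun ω => n p ω - nd ω) 2 μ := fun p => (hnL2 p).sub hndL2
  have hterm_int : ∀ i j : Fin N,
      Integrable (fun ω => (u ω i * star (u ω j)) * (star (v ω i) * v ω j)) μ := by
    intro i j
    have h3 : IndepFun (fun ω => u ω i * star (u ω j)) (fun ω => star (v ω i) * v ω j) μ :=
      hIuv.comp (φ := fun a : Fin N → ℂ => a i * star (a j))
        (ψ := fun b : Fin N → ℂ => star (b i) * b j)
        ((measurable_pi_apply i).mul (hstarm.comp (measurable_pi_apply j)))
        ((hstarm.comp (measurable_pi_apply i)).mul (measurable_pi_apply j))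
    exact h3.integrable_mul (int_mul (huL2 i) (memLp_star (huL2 j)))
      (int_mul (memLp_star (hvL2 i)) (hvL2 j))
  have hss_expand : ∀ ω, (star (v ω) ⬝ᵥ u ω) * star (star (v ω) ⬝ᵥ u ω)
      = ∑ i, ∑ j, (u ω i * star (u ω j)) * (star (v ω i) * v ω j) := by
    intro ω
    simp only [dotProduct, Pi.star_apply, star_sum, Finset.sum_mul_sum]
    refine Finset.sum_congr rfl fun i _ => Finset.sum_congr rfl fun j _ => ?_
    simp only [star_mul', star_star]
    ring
  have hss_int : Integrable (fun ω => (star (v ω) ⬝ᵥ u ω) * star (star (v ω) ⬝ᵥ u ω)) μ := by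
    have h := integrable_finset_sum (μ := μ) Finset.univ
      (f := fun (i : Fin N) ω => ∑ j, (u ω i * star (u ω j)) * (star (v ω i) * v ω j))
      (fun i _ => integrable_finset_sum _ fun j _ => hterm_int i j)
    exact h.congr (ae_of_all _ fun ω => (hss_expand ω).symm)
  have hsL2 : MemLp (fun ω => star (v ω) ⬝ᵥ u ω) 2 μ := by
    rw [memLp_two_iff_integrable_sq_norm hsm.aestronglyMeasurable]
    refine hss_int.norm.congr (ae_of_all _ fun ω => ?_)
    simp only [norm_mul, norm_star, sq]
  have htL2 : ∀ p : Fin 2, MemLp (t p) 2 μ := by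
    intro p
    have heq : t p = fun ω =>
        Complex.exp (Complex.I * (φ p ω : ℂ)) * (star (v ω) ⬝ᵥ u ω) + (n p ω - nd ω) :=
      funext fun ω => ht' p ω
    rw [heq]
    refine MemLp.add ?_ (hmL2 p)
    refine hsL2.of_le ((ham p).mul hsm).aestronglyMeasurable
      (ae_of_all _ fun ω => ?_)
    rw [norm_mul, hnorm_exp, one_mul]
  -- cross moments of the noises
  have hcrossp : ∀ p : Fin 2, ∫ ω, n p ω * star (nd ω) ∂μ = 0 := by
    intro p
    have h := indep_integral_mul (hnm p) hndm (hInd p)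
      (f := fun z : ℂ => z) (g := fun z : ℂ => star z) measurable_id hstarm
    calc ∫ ω, n p ω * star (nd ω) ∂μ
        = (∫ ω, n p ω ∂μ) * ∫ ω, star (nd ω) ∂μ := h
      _ = 0 := by rw [hnmean p, zero_mul]
  have hcrossdp : ∀ p : Fin 2, ∫ ω, nd ω * star (n p ω) ∂μ = 0 := by
    intro p
    have h := indep_integral_mul hndm (hnm p) (hInd p).symm
      (f := fun z : ℂ => z) (g := fun z : ℂ => star z) measurable_id hstarm
    calc ∫ ω, nd ω * star (n p ω) ∂μ
        = (∫ ω, nd ω ∂μ) * ∫ ω, star (n p ω) ∂μ := h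
      _ = 0 := by rw [hndmean, zero_mul]
  -- second moment of the noise differences
  have hT4 : ∀ p q : Fin 2, (∫ ω, n p ω * star (n q ω) ∂μ = if p = q then (σ2:ℂ) else 0) →
      ∫ ω, (n p ω - nd ω) * star (n q ω - nd ω) ∂μ
        = (if p = q then (σ2:ℂ) else 0) + (σd2 : ℂ) := by
    intro p q hpq
    have hpt4 : ∀ ω, (n p ω - nd ω) * star (n q ω - nd ω)
        = n p ω * star (n q ω) - n p ω * star (nd ω)
          - nd ω * star (n q ω) + nd ω * star (nd ω) := by
      intro ω; simp only [star_sub]; ring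
    rw [integral_congr_ae (ae_of_all _ hpt4)]
    have Ia : Integrable (fun ω => n p ω * star (n q ω)) μ :=
      int_mul (hnL2 p) (memLp_star (hnL2 q))
    have Ib : Integrable (fun ω => n p ω * star (nd ω)) μ :=
      int_mul (hnL2 p) (memLp_star hndL2)
    have Ic : Integrable (fun ω => nd ω * star (n q ω)) μ :=
      int_mul hndL2 (memLp_star (hnL2 q))
    have Id : Integrable (fun ω => nd ω * star (nd ω)) μ :=
      int_mul hndL2 (memLp_star hndL2)
    have Iab : Integrable (fun ω => n p ω * star (n q ω) - n p ω * star (nd ω)) μ :=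
      Ia.sub Ib
    have Iabc : Integrable (fun ω => n p ω * star (n q ω) - n p ω * star (nd ω)
        - nd ω * star (n q ω)) μ := Iab.sub Ic
    rw [integral_add Iabc Id, integral_sub Iab Ic, integral_sub Ia Ib,
      hpq, hcrossp p, hcrossdp q, hσd]
    ring
  -- the numerator
  have key_num : ∫ ω, t 0 ω * star (t 1 ω) ∂μ = (σd2 : ℂ) := by
    have hpt : ∀ ω, t 0 ω * star (t 1 ω) =
        (Complex.exp (Complex.I * (φ 0 ω : ℂ)) * star (Complex.exp (Complex.I * (φ 1 ω : ℂ))))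
            * ((star (v ω) ⬝ᵥ u ω) * star (star (v ω) ⬝ᵥ u ω))
        + (Complex.exp (Complex.I * (φ 0 ω : ℂ))
            * ((star (v ω) ⬝ᵥ u ω) * star (n 1 ω - nd ω))
        + (star (Complex.exp (Complex.I * (φ 1 ω : ℂ)))
            * ((n 0 ω - nd ω) * star (star (v ω) ⬝ᵥ u ω))
        + (n 0 ω - nd ω) * star (n 1 ω - nd ω))) := by
      intro ω
      rw [ht' 0, ht' 1]
      simp only [star_add, star_mul']
      ring
    rw [integral_congr_ae (ae_of_all _ hpt)]
    have I1 : Integrable (fun ω =>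
        (Complex.exp (Complex.I * (φ 0 ω : ℂ)) * star (Complex.exp (Complex.I * (φ 1 ω : ℂ))))
          * ((star (v ω) ⬝ᵥ u ω) * star (star (v ω) ⬝ᵥ u ω))) μ :=
      hss_int.bdd_mul ((ham 0).mul (hstarm.comp (ham 1))).aestronglyMeasurable
        (c := 1) (ae_of_all _ fun ω => by rw [norm_mul, norm_star, hnorm_exp, hnorm_exp]; norm_num)
    have I2 : Integrable (fun ω => Complex.exp (Complex.I * (φ 0 ω : ℂ))
        * ((star (v ω) ⬝ᵥ u ω) * star (n 1 ω - nd ω))) μ :=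
      (int_mul hsL2 (memLp_star (hmL2 1))).bdd_mul (ham 0).aestronglyMeasurable
        (c := 1) (ae_of_all _ fun ω => le_of_eq (hnorm_exp _))
    have I3 : Integrable (fun ω => star (Complex.exp (Complex.I * (φ 1 ω : ℂ)))
        * ((n 0 ω - nd ω) * star (star (v ω) ⬝ᵥ u ω))) μ :=
      (int_mul (hmL2 0) (memLp_star hsL2)).bdd_mul
        (hstarm.comp (ham 1)).aestronglyMeasurable
        (c := 1) (ae_of_all _ fun ω => by rw [norm_star]; exact le_of_eq (hnorm_exp _))
    have I4 : Integrable (fun ω => (n 0 ω - nd ω) * star (n 1 ω - nd ω)) μ :=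
      int_mul (hmL2 0) (memLp_star (hmL2 1))
    have I34 : Integrable (fun ω => star (Complex.exp (Complex.I * (φ 1 ω : ℂ)))
        * ((n 0 ω - nd ω) * star (star (v ω) ⬝ᵥ u ω))
        + (n 0 ω - nd ω) * star (n 1 ω - nd ω)) μ := I3.add I4
    have I234 : Integrable (fun ω => Complex.exp (Complex.I * (φ 0 ω : ℂ))
        * ((star (v ω) ⬝ᵥ u ω) * star (n 1 ω - nd ω))
        + (star (Complex.exp (Complex.I * (φ 1 ω : ℂ)))
            * ((n 0 ω - nd ω) * star (star (v ω) ⬝ᵥ u ω))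
        + (n 0 ω - nd ω) * star (n 1 ω - nd ω))) μ := I2.add I34
    rw [integral_add I1 I234, integral_add I2 I34, integral_add I3 I4]
    have hT1 : ∫ ω,
        (Complex.exp (Complex.I * (φ 0 ω : ℂ)) * star (Complex.exp (Complex.I * (φ 1 ω : ℂ))))
          * ((star (v ω) ⬝ᵥ u ω) * star (star (v ω) ⬝ᵥ u ω)) ∂μ = 0 := by
      have h := indep_integral_mul ((hφm 0).prodMk (hφm 1)) hWm hφrest
        (f := fun q : ℝ × ℝ => Complex.exp (Complex.I * q.1) * star (Complex.exp (Complex.I * q.2)))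
        (g := fun w => (star w.2.1 ⬝ᵥ w.1) * star (star w.2.1 ⬝ᵥ w.1))
        ((hexpm.comp measurable_fst).mul (hstarm.comp (hexpm.comp measurable_snd)))
        (hSEm.mul (hstarm.comp hSEm))
      have h2 : ∫ ω, Complex.exp (Complex.I * (φ 0 ω : ℂ))
          * star (Complex.exp (Complex.I * (φ 1 ω : ℂ))) ∂μ = 0 := by
        have h3 := indep_integral_mul (hφm 0) (hφm 1) hφindep
          (f := fun x : ℝ => Complex.exp (Complex.I * x))
          (g := fun y : ℝ => star (Complex.exp (Complex.I * y))) hexpm (hstarm.comp hexpm)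
        calc ∫ ω, Complex.exp (Complex.I * (φ 0 ω : ℂ))
              * star (Complex.exp (Complex.I * (φ 1 ω : ℂ))) ∂μ
            = (∫ ω, Complex.exp (Complex.I * (φ 0 ω : ℂ)) ∂μ)
              * ∫ ω, star (Complex.exp (Complex.I * (φ 1 ω : ℂ))) ∂μ := h3
          _ = 0 := by rw [hexp0 0, zero_mul]
      calc ∫ ω,
          (Complex.exp (Complex.I * (φ 0 ω : ℂ)) * star (Complex.exp (Complex.I * (φ 1 ω : ℂ))))
            * ((star (v ω) ⬝ᵥ u ω) * star (star (v ω) ⬝ᵥ u ω)) ∂μ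
          = (∫ ω, Complex.exp (Complex.I * (φ 0 ω : ℂ))
              * star (Complex.exp (Complex.I * (φ 1 ω : ℂ))) ∂μ)
            * ∫ ω, (star (v ω) ⬝ᵥ u ω) * star (star (v ω) ⬝ᵥ u ω) ∂μ := h
        _ = 0 := by rw [h2, zero_mul]
    have hIφ0W : IndepFun (φ 0) (fun ω => (u ω, v ω, n 0 ω, n 1 ω, nd ω)) μ :=
      hφrest.comp measurable_fst measurable_id
    have hIφ1W : IndepFun (φ 1) (fun ω => (u ω, v ω, n 0 ω, n 1 ω, nd ω)) μ :=
      hφrest.comp measurable_snd measurable_id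
    have hT2 : ∫ ω, Complex.exp (Complex.I * (φ 0 ω : ℂ))
        * ((star (v ω) ⬝ᵥ u ω) * star (n 1 ω - nd ω)) ∂μ = 0 := by
      have h := indep_integral_mul (hφm 0) hWm hIφ0W
        (f := fun x : ℝ => Complex.exp (Complex.I * x))
        (g := fun w => (star w.2.1 ⬝ᵥ w.1) * star (w.2.2.2.1 - w.2.2.2.2)) hexpm
        (hSEm.mul (hstarm.comp (measurable_snd.snd.snd.fst.sub measurable_snd.snd.snd.snd)))
      calc ∫ ω, Complex.exp (Complex.I * (φ 0 ω : ℂ))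
            * ((star (v ω) ⬝ᵥ u ω) * star (n 1 ω - nd ω)) ∂μ
          = (∫ ω, Complex.exp (Complex.I * (φ 0 ω : ℂ)) ∂μ)
            * ∫ ω, (star (v ω) ⬝ᵥ u ω) * star (n 1 ω - nd ω) ∂μ := h
        _ = 0 := by rw [hexp0 0, zero_mul]
    have hT3 : ∫ ω, star (Complex.exp (Complex.I * (φ 1 ω : ℂ)))
        * ((n 0 ω - nd ω) * star (star (v ω) ⬝ᵥ u ω)) ∂μ = 0 := by
      have h := indep_integral_mul (hφm 1) hWm hIφ1W
        (f := fun x : ℝ => star (Complex.exp (Complex.I * x)))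
        (g := fun w => (w.2.2.1 - w.2.2.2.2) * star (star w.2.1 ⬝ᵥ w.1))
        (hstarm.comp hexpm)
        ((measurable_snd.snd.fst.sub measurable_snd.snd.snd.snd).mul (hstarm.comp hSEm))
      calc ∫ ω, star (Complex.exp (Complex.I * (φ 1 ω : ℂ)))
            * ((n 0 ω - nd ω) * star (star (v ω) ⬝ᵥ u ω)) ∂μ
          = (∫ ω, star (Complex.exp (Complex.I * (φ 1 ω : ℂ))) ∂μ)
            * ∫ ω, (n 0 ω - nd ω) * star (star (v ω) ⬝ᵥ u ω) ∂μ := h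
        _ = 0 := by rw [hstarexp0 1, zero_mul]
    have hT4' : ∫ ω, (n 0 ω - nd ω) * star (n 1 ω - nd ω) ∂μ = (σd2 : ℂ) := by
      have h := hT4 0 1 (by rw [if_neg (by decide)]; exact hnuncorr)
      rw [h, if_neg (by decide), zero_add]
    rw [hT1, hT2, hT3, hT4']
    ring
  -- the denominator
  have key_den : ∀ p : Fin 2, ∫ ω, t p ω * star (t p ω) ∂μ
      = (Rv * Ru).trace + (σd2 : ℂ) + (σ2 : ℂ) := by
    intro p
    have hIφpW : IndepFun (φ p) (fun ω => (u ω, v ω, n 0 ω, n 1 ω, nd ω)) μ := by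
      fin_cases p
      · exact hφrest.comp measurable_fst measurable_id
      · exact hφrest.comp measurable_snd measurable_id
    obtain ⟨gp, hgpm, hgpW⟩ : ∃ g : (Fin N → ℂ) × ((Fin N → ℂ) × (ℂ × (ℂ × ℂ))) → ℂ,
        Measurable g ∧ ∀ ω, g (u ω, v ω, n 0 ω, n 1 ω, nd ω) = n p ω := by
      fin_cases p
      · exact ⟨fun w => w.2.2.1, measurable_snd.snd.fst, fun ω => rfl⟩
      · exact ⟨fun w => w.2.2.2.1, measurable_snd.snd.snd.fst, fun ω => rfl⟩
    have hpt : ∀ ω, t p ω * star (t p ω) =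
        ((star (v ω) ⬝ᵥ u ω) * star (star (v ω) ⬝ᵥ u ω))
        + (Complex.exp (Complex.I * (φ p ω : ℂ))
            * ((star (v ω) ⬝ᵥ u ω) * star (n p ω - nd ω))
        + (star (Complex.exp (Complex.I * (φ p ω : ℂ)))
            * ((n p ω - nd ω) * star (star (v ω) ⬝ᵥ u ω))
        + (n p ω - nd ω) * star (n p ω - nd ω))) := by
      intro ω
      rw [ht' p]
      have expand : ∀ a s m : ℂ, (a * s + m) * star (a * s + m)
          = (a * star a) * (s * star s)
            + (a * (s * star m) + (star a * (m * star s) + m * star m)) := by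
        intro a s m
        simp only [star_add, star_mul']
        ring
      rw [expand, haconj (φ p ω), one_mul]
    rw [integral_congr_ae (ae_of_all _ hpt)]
    have I2 : Integrable (fun ω => Complex.exp (Complex.I * (φ p ω : ℂ))
        * ((star (v ω) ⬝ᵥ u ω) * star (n p ω - nd ω))) μ :=
      (int_mul hsL2 (memLp_star (hmL2 p))).bdd_mul (ham p).aestronglyMeasurable
        (c := 1) (ae_of_all _ fun ω => le_of_eq (hnorm_exp _))
    have I3 : Integrable (fun ω => star (Complex.exp (Complex.I * (φ p ω : ℂ)))
        * ((n p ω - nd ω) * star (star (v ω) ⬝ᵥ u ω))) μ :=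
      (int_mul (hmL2 p) (memLp_star hsL2)).bdd_mul
        (hstarm.comp (ham p)).aestronglyMeasurable
        (c := 1) (ae_of_all _ fun ω => by rw [norm_star]; exact le_of_eq (hnorm_exp _))
    have I4 : Integrable (fun ω => (n p ω - nd ω) * star (n p ω - nd ω)) μ :=
      int_mul (hmL2 p) (memLp_star (hmL2 p))
    have I34 : Integrable (fun ω => star (Complex.exp (Complex.I * (φ p ω : ℂ)))
        * ((n p ω - nd ω) * star (star (v ω) ⬝ᵥ u ω))
        + (n p ω - nd ω) * star (n p ω - nd ω)) μ := I3.add I4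
    have I234 : Integrable (fun ω => Complex.exp (Complex.I * (φ p ω : ℂ))
        * ((star (v ω) ⬝ᵥ u ω) * star (n p ω - nd ω))
        + (star (Complex.exp (Complex.I * (φ p ω : ℂ)))
            * ((n p ω - nd ω) * star (star (v ω) ⬝ᵥ u ω))
        + (n p ω - nd ω) * star (n p ω - nd ω))) μ := I2.add I34
    rw [integral_add hss_int I234, integral_add I2 I34, integral_add I3 I4]
    have hSS : ∫ ω, (star (v ω) ⬝ᵥ u ω) * star (star (v ω) ⬝ᵥ u ω) ∂μ
        = (Rv * Ru).trace := by
      rw [integral_congr_ae (ae_of_all _ hss_expand),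
        integral_finset_sum _ (fun i _ => integrable_finset_sum _ fun j _ => hterm_int i j)]
      have hij : ∀ i j : Fin N,
          ∫ ω, (u ω i * star (u ω j)) * (star (v ω i) * v ω j) ∂μ = Ru i j * Rv j i := by
        intro i j
        have h := indep_integral_mul hum hvm hIuv
          (f := fun a : Fin N → ℂ => a i * star (a j))
          (g := fun b : Fin N → ℂ => star (b i) * b j)
          ((measurable_pi_apply i).mul (hstarm.comp (measurable_pi_apply j)))
          ((hstarm.comp (measurable_pi_apply i)).mul (measurable_pi_apply j))
        calc ∫ ω, (u ω i * star (u ω j)) * (star (v ω i) * v ω j) ∂μ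
            = (∫ ω, u ω i * star (u ω j) ∂μ) * ∫ ω, star (v ω i) * v ω j ∂μ := h
          _ = Ru i j * Rv j i := by
              rw [← hRu i j]
              congr 1
              rw [hRv j i]
              exact integral_congr_ae (ae_of_all _ fun ω => mul_comm _ _)
      have step : ∀ i : Fin N,
          ∫ ω, ∑ j, (u ω i * star (u ω j)) * (star (v ω i) * v ω j) ∂μ
            = ∑ j, Ru i j * Rv j i := by
        intro i
        rw [integral_finset_sum _ fun j _ => hterm_int i j]
        exact Finset.sum_congr rfl fun j _ => hij i j
      calc ∑ i, ∫ ω, ∑ j, (u ω i * star (u ω j)) * (star (v ω i) * v ω j) ∂μ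
          = ∑ i, ∑ j, Ru i j * Rv j i := Finset.sum_congr rfl fun i _ => step i
        _ = (Rv * Ru).trace := by
            rw [Matrix.trace]
            simp only [Matrix.diag_apply, Matrix.mul_apply]
            rw [Finset.sum_comm]
            exact Finset.sum_congr rfl fun j _ => Finset.sum_congr rfl fun i _ =>
              mul_comm _ _
    have hT2p : ∫ ω, Complex.exp (Complex.I * (φ p ω : ℂ))
        * ((star (v ω) ⬝ᵥ u ω) * star (n p ω - nd ω)) ∂μ = 0 := by
      have h := indep_integral_mul (hφm p) hWm hIφpW
        (f := fun x : ℝ => Complex.exp (Complex.I * x))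
        (g := fun w => (star w.2.1 ⬝ᵥ w.1) * star (gp w - w.2.2.2.2)) hexpm
        (hSEm.mul (hstarm.comp (hgpm.sub measurable_snd.snd.snd.snd)))
      calc ∫ ω, Complex.exp (Complex.I * (φ p ω : ℂ))
            * ((star (v ω) ⬝ᵥ u ω) * star (n p ω - nd ω)) ∂μ
          = ∫ ω, Complex.exp (Complex.I * (φ p ω : ℂ))
            * ((star (v ω) ⬝ᵥ u ω)
              * star (gp (u ω, v ω, n 0 ω, n 1 ω, nd ω) - nd ω)) ∂μ :=
            integral_congr_ae (ae_of_all _ fun ω => by simp only [hgpW])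
        _ = (∫ ω, Complex.exp (Complex.I * (φ p ω : ℂ)) ∂μ)
            * ∫ ω, (star (v ω) ⬝ᵥ u ω)
              * star (gp (u ω, v ω, n 0 ω, n 1 ω, nd ω) - nd ω) ∂μ := h
        _ = 0 := by rw [hexp0 p, zero_mul]
    have hT3p : ∫ ω, star (Complex.exp (Complex.I * (φ p ω : ℂ)))
        * ((n p ω - nd ω) * star (star (v ω) ⬝ᵥ u ω)) ∂μ = 0 := by
      have h := indep_integral_mul (hφm p) hWm hIφpW
        (f := fun x : ℝ => star (Complex.exp (Complex.I * x)))
        (g := fun w => (gp w - w.2.2.2.2) * star (star w.2.1 ⬝ᵥ w.1))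
        (hstarm.comp hexpm)
        ((hgpm.sub measurable_snd.snd.snd.snd).mul (hstarm.comp hSEm))
      calc ∫ ω, star (Complex.exp (Complex.I * (φ p ω : ℂ)))
            * ((n p ω - nd ω) * star (star (v ω) ⬝ᵥ u ω)) ∂μ
          = ∫ ω, star (Complex.exp (Complex.I * (φ p ω : ℂ)))
            * ((gp (u ω, v ω, n 0 ω, n 1 ω, nd ω) - nd ω)
              * star (star (v ω) ⬝ᵥ u ω)) ∂μ :=
            integral_congr_ae (ae_of_all _ fun ω => by simp only [hgpW])
        _ = (∫ ω, star (Complex.exp (Complex.I * (φ p ω : ℂ))) ∂μ)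
            * ∫ ω, (gp (u ω, v ω, n 0 ω, n 1 ω, nd ω) - nd ω)
              * star (star (v ω) ⬝ᵥ u ω) ∂μ := h
        _ = 0 := by rw [hstarexp0 p, zero_mul]
    have hT4p : ∫ ω, (n p ω - nd ω) * star (n p ω - nd ω) ∂μ = (σ2 : ℂ) + (σd2 : ℂ) := by
      have h := hT4 p p (by rw [if_pos rfl]; exact hσ p)
      rw [h, if_pos rfl]
    rw [hSS, hT2p, hT3p, hT4p]
    ring
  rw [key_num, key_den l]
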